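/- Let τ > 0, σ > 1, h > 0, k > e and let W be the principal branch of the Lambert W function. Define f(r) = r^σ ln h + r ln k − τ r^σ ln r for r > 0, and set r_0 = h^{1/τ} · exp( W(𝔯(h,k))/(σ-1) − 1/σ ), where 𝔯(h,k) = h^{-(σ-1)/τ} · e^{(σ-1)/σ} · ((σ-1)/(τσ)) · ln k. Then r_0 is a critical point of f, i.e., σ r_0^{σ-1} ln h + ln k − τσ r_0^{σ-1} ln r_0 − τ r_0^{σ-1} = 0. -/
import Mathlib


/-- with f(r) = r^σ ln h + r ln k − τ r^σ ln r and
r₀ = h^{1/τ} exp(W(𝔯(h,k))/(σ-1) − 1/σ), where 𝔯(h,k) = h^{-(σ-1)/τ} e^{(σ-1)/σ}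
((σ-1)/(τσ)) ln k and W is the principal branch of the Lambert W function, r₀ is a
critical point of f: σ r₀^{σ-1} ln h + ln k − τσ r₀^{σ-1} ln r₀ − τ r₀^{σ-1} = 0. -/
theorem critical_point_of_f (τ σ h k : ℝ) (hτ : 0 < τ) (hσ : 1 < σ) (hh : 0 < h)
    (hk : Real.exp 1 < k) (W : ℝ → ℝ) (hW_nonneg : ∀ x : ℝ, 0 ≤ x → 0 ≤ W x)
    (hW : ∀ x : ℝ, 0 ≤ x → W x * Real.exp (W x) = x)
    (r₀ : ℝ) (hr₀ : r₀ = h ^ (1 / τ) *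
      Real.exp ((W (h ^ (-((σ - 1) / τ)) * Real.exp ((σ - 1) / σ) * ((σ - 1) / (τ * σ)) *
          Real.log k)) / (σ - 1) - 1 / σ)) :
    σ * r₀ ^ (σ - 1) * Real.log h + Real.log k -
        τ * σ * r₀ ^ (σ - 1) * Real.log r₀ - τ * r₀ ^ (σ - 1) = 0 := by
  have hσ1 : (0:ℝ) < σ - 1 := by linarith
  have hσ0 : (0:ℝ) < σ := by linarith
  have hk0 : (0:ℝ) < k := lt_trans (Real.exp_pos 1) hk
  have hlk : 0 < Real.log k := by
    have h1 : (1:ℝ) < Real.log k := (Real.lt_log_iff_exp_lt hk0).2 hk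
    linarith
  set x : ℝ := h ^ (-((σ - 1) / τ)) * Real.exp ((σ - 1) / σ) * ((σ - 1) / (τ * σ)) *
      Real.log k with hxdef
  have hxpos : 0 < x := by
    apply mul_pos _ hlk
    exact mul_pos (mul_pos (Real.rpow_pos_of_pos hh _) (Real.exp_pos _))
      (div_pos hσ1 (mul_pos hτ hσ0))
  set w : ℝ := W x with hwdef
  have hw : w * Real.exp w = x := hW x hxpos.le
  have hlog : Real.log r₀ = Real.log h / τ + (w / (σ - 1) - 1 / σ) := by
    rw [hr₀, Real.log_mul (ne_of_gt (Real.rpow_pos_of_pos hh _)) (Real.exp_ne_zero _),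
      Real.log_rpow hh, Real.log_exp]
    ring
  have hpow : r₀ ^ (σ - 1) =
      h ^ ((σ - 1) / τ) * (Real.exp w * Real.exp (-((σ - 1) / σ))) := by
    rw [hr₀, Real.mul_rpow (Real.rpow_nonneg hh.le _) (Real.exp_pos _).le,
      ← Real.rpow_mul hh.le, ← Real.exp_mul, ← Real.exp_add]
    congr 1
    · congr 1
      ring
    · field_simp
      ring
  have h1 : h ^ ((σ - 1) / τ) * h ^ (-((σ - 1) / τ)) = 1 := by
    rw [← Real.rpow_add hh]
    simp
  have h2 : Real.exp (-((σ - 1) / σ)) * Real.exp ((σ - 1) / σ) = 1 := by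
    rw [← Real.exp_add]
    simp
  have hkey : Real.log k = (τ * σ / (σ - 1)) * w * (r₀ ^ (σ - 1)) := by
    rw [hpow]
    have e1 : (τ * σ / (σ - 1)) * w * (h ^ ((σ - 1) / τ) *
        (Real.exp w * Real.exp (-((σ - 1) / σ))))
        = (τ * σ / (σ - 1)) * h ^ ((σ - 1) / τ) * Real.exp (-((σ - 1) / σ)) *
          (w * Real.exp w) := by ring
    rw [e1, hw, hxdef]
    have e2 : τ * σ / (σ - 1) * h ^ ((σ - 1) / τ) * Real.exp (-((σ - 1) / σ)) *
        (h ^ (-((σ - 1) / τ)) * Real.exp ((σ - 1) / σ) * ((σ - 1) / (τ * σ)) * Real.log k)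
        = (τ * σ / (σ - 1) * ((σ - 1) / (τ * σ))) *
          (h ^ ((σ - 1) / τ) * h ^ (-((σ - 1) / τ))) *
          (Real.exp (-((σ - 1) / σ)) * Real.exp ((σ - 1) / σ)) * Real.log k := by ring
    rw [e2, h1, h2]
    field_simp
  rw [hlog, hkey]
  field_simp
  ring
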